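/- arXiv:2310.12613 — 2 statements merged into one kernel-verified Lean document; each statement's English description precedes it below -/
import Mathlib

section
/- Let φ = Gψ be an LTL formula and let B := B(φ) be its basis. For every C ⊆ B, the three formulas Gψ, ψ U G(eval(ψ,C)), and G(eval(ψ,C)) R ψ are pairwise equivalent under context ⟨C,B⟩. -/
namespace LTLNorm

/-- LTL formulas in negation normal form. -/
inductive F (Ap : Type) : Type
  | tt    : F Ap
  | ff    : F Ap
  | pos   : Ap → F Ap
  | nlit  : Ap → F Ap
  | and   : F Ap → F Ap → F Ap
  | or    : F Ap → F Ap → F Ap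
  | next  : F Ap → F Ap
  | untl  : F Ap → F Ap → F Ap
  | wuntl : F Ap → F Ap → F Ap
  | rel   : F Ap → F Ap → F Ap
  | srel  : F Ap → F Ap → F Ap
  deriving DecidableEq

/-- Infinite words over the alphabet `2^Ap`. -/
abbrev Word (Ap : Type) := ℕ → Set Ap

/-- Suffix of a word starting at position `i`. -/
def suff {Ap : Type} (w : Word Ap) (i : ℕ) : Word Ap := fun n => w (n + i)

/-- Satisfaction relation. -/
def Sat {Ap : Type} : Word Ap → F Ap → Prop
  | _, F.tt => True
  | _, F.ff => False
  | w, F.pos a => a ∈ w 0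
  | w, F.nlit a => a ∉ w 0
  | w, F.and φ ψ => Sat w φ ∧ Sat w ψ
  | w, F.or φ ψ => Sat w φ ∨ Sat w ψ
  | w, F.next φ => Sat (suff w 1) φ
  | w, F.untl φ ψ => ∃ k, Sat (suff w k) ψ ∧ ∀ j < k, Sat (suff w j) φ
  | w, F.wuntl φ ψ => (∀ k, Sat (suff w k) φ) ∨ ∃ k, Sat (suff w k) ψ ∧ ∀ j < k, Sat (suff w j) φ
  | w, F.srel φ ψ => ∃ k, Sat (suff w k) φ ∧ ∀ j ≤ k, Sat (suff w j) ψ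
  | w, F.rel φ ψ => (∀ k, Sat (suff w k) ψ) ∨ ∃ k, Sat (suff w k) φ ∧ ∀ j ≤ k, Sat (suff w j) ψ

/-- Equivalence of formulas. -/
def Equiv {Ap : Type} (φ ψ : F Ap) : Prop := ∀ w : Word Ap, Sat w φ ↔ Sat w ψ

/-- Entailment: every word satisfying `φ` satisfies `ψ`. -/
def Entails {Ap : Type} (φ ψ : F Ap) : Prop := ∀ w : Word Ap, Sat w φ → Sat w ψ

/-- F φ := tt U φ -/
def Ff {Ap : Type} (φ : F Ap) : F Ap := F.untl F.tt φ
/-- G φ := φ W ff -/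
def Gf {Ap : Type} (φ : F Ap) : F Ap := F.wuntl φ F.ff
/-- GF φ := G (F φ) -/
def GFf {Ap : Type} (φ : F Ap) : F Ap := Gf (Ff φ)
/-- FG φ := F (G φ) -/
def FGf {Ap : Type} (φ : F Ap) : F Ap := Ff (Gf φ)

/-- Number of nodes of the syntax tree. -/
def size {Ap : Type} : F Ap → ℕ
  | F.tt => 1
  | F.ff => 1
  | F.pos _ => 1
  | F.nlit _ => 1
  | F.and φ ψ => size φ + size ψ + 1
  | F.or φ ψ => size φ + size ψ + 1
  | F.next φ => size φ + 1
  | F.untl φ ψ => size φ + size ψ + 1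
  | F.wuntl φ ψ => size φ + size ψ + 1
  | F.rel φ ψ => size φ + size ψ + 1
  | F.srel φ ψ => size φ + size ψ + 1

/-- The dual of a formula in negation normal form. -/
def dual {Ap : Type} : F Ap → F Ap
  | F.tt => F.ff
  | F.ff => F.tt
  | F.pos a => F.nlit a
  | F.nlit a => F.pos a
  | F.and φ ψ => F.or (dual φ) (dual ψ)
  | F.or φ ψ => F.and (dual φ) (dual ψ)
  | F.next φ => F.next (dual φ)
  | F.untl φ ψ => F.rel (dual φ) (dual ψ)
  | F.rel φ ψ => F.untl (dual φ) (dual ψ)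
  | F.wuntl φ ψ => F.srel (dual φ) (dual ψ)
  | F.srel φ ψ => F.wuntl (dual φ) (dual ψ)

/-- `LangC B C` is the set of words satisfying every formula of `C` and
no formula of `B \ C` (the language of the context `⟨C,B⟩`). -/
def LangC {Ap : Type} (B C : Finset (F Ap)) : Set (Word Ap) :=
  {w | (∀ ψ ∈ C, Sat w ψ) ∧ ∀ ψ ∈ B, ψ ∉ C → ¬ Sat w ψ}

/-- Equivalence under the context `⟨C,B⟩`. -/
def EquivUnder {Ap : Type} (B C : Finset (F Ap)) (φ₁ φ₂ : F Ap) : Prop :=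
  ∀ w ∈ LangC B C, (Sat w φ₁ ↔ Sat w φ₂)

/-- Disjunction of a list of formulas. -/
def bigOr {Ap : Type} (l : List (F Ap)) : F Ap := l.foldr F.or F.ff

/-- Conjunction of a list of formulas. -/
def bigAnd {Ap : Type} (l : List (F Ap)) : F Ap := l.foldr F.and F.tt

variable {Ap : Type} [DecidableEq Ap]

/-- The set of subformulas of a formula. -/
def sf : F Ap → Finset (F Ap)
  | F.tt => {F.tt}
  | F.ff => {F.ff}
  | F.pos a => {F.pos a}
  | F.nlit a => {F.nlit a}
  | F.and φ ψ => insert (F.and φ ψ) (sf φ ∪ sf ψ)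
  | F.or φ ψ => insert (F.or φ ψ) (sf φ ∪ sf ψ)
  | F.next φ => insert (F.next φ) (sf φ)
  | F.untl φ ψ => insert (F.untl φ ψ) (sf φ ∪ sf ψ)
  | F.wuntl φ ψ => insert (F.wuntl φ ψ) (sf φ ∪ sf ψ)
  | F.rel φ ψ => insert (F.rel φ ψ) (sf φ ∪ sf ψ)
  | F.srel φ ψ => insert (F.srel φ ψ) (sf φ ∪ sf ψ)

/-- `B_GF(φ) = { GF ψ : χ U ψ or ψ M χ is a subformula of φ }`. -/
def BGF (φ : F Ap) : Finset (F Ap) :=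
  (sf φ).biUnion fun σ =>
    match σ with
    | F.untl _ ψ => {GFf ψ}
    | F.srel ψ _ => {GFf ψ}
    | _ => ∅

/-- `B_FG(φ) = { FG ψ : χ W ψ or ψ R χ is a subformula of φ }`. -/
def BFG (φ : F Ap) : Finset (F Ap) :=
  (sf φ).biUnion fun σ =>
    match σ with
    | F.wuntl _ ψ => {FGf ψ}
    | F.rel ψ _ => {FGf ψ}
    | _ => ∅

/-- The basis `B(φ) = B_GF(φ) ∪ B_FG(φ)`. -/
def Bset (φ : F Ap) : Finset (F Ap) := BGF φ ∪ BFG φ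

/-- The argument of a basis formula: `GF ψ ↦ ψ` and `FG ψ ↦ ψ`. -/
def innerArg : F Ap → F Ap
  | F.wuntl (F.untl F.tt ψ) F.ff => ψ      -- GF ψ
  | F.untl F.tt (F.wuntl ψ F.ff) => ψ      -- FG ψ
  | φ => φ

/-- `⇓ψ`: the basis formulas of `B(φ0)` strictly below `op(ψ)` in the order `≺`,
i.e. those whose argument is a subformula of `ψ`. -/
def down (φ0 ψ : F Ap) : Finset (F Ap) :=
  (Bset φ0).filter fun χ => innerArg χ ∈ sf ψ

/-- The formula `eval(ψ, C)`. -/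
def eval (C : Finset (F Ap)) : F Ap → F Ap
  | F.tt => F.tt
  | F.ff => F.ff
  | F.pos a => F.pos a
  | F.nlit a => F.nlit a
  | F.and φ ψ => F.and (eval C φ) (eval C ψ)
  | F.or φ ψ => F.or (eval C φ) (eval C ψ)
  | F.next φ => F.next (eval C φ)
  | F.wuntl φ ψ => F.wuntl (eval C φ) (eval C ψ)
  | F.rel φ ψ => F.rel (eval C φ) (eval C ψ)
  | F.untl φ ψ => if GFf ψ ∈ C then F.wuntl (eval C φ) (eval C ψ) else F.ff
  | F.srel φ ψ => if GFf φ ∈ C then F.rel (eval C φ) (eval C ψ) else F.ff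

section Aux

lemma suff_suff (w : Word Ap) (i j : ℕ) : suff (suff w i) j = suff w (j + i) := by
  funext n; simp [suff, Nat.add_assoc]

lemma sat_Gf {w : Word Ap} {χ : F Ap} : Sat w (Gf χ) ↔ ∀ k, Sat (suff w k) χ := by
  simp [Gf, Sat]

lemma sat_GF {w : Word Ap} {χ : F Ap} :
    Sat w (GFf χ) ↔ ∀ k, ∃ m, Sat (suff w (m + k)) χ := by
  simp [GFf, Gf, Ff, Sat, suff_suff]

lemma not_GF {w : Word Ap} {χ : F Ap} (h : ¬ Sat w (GFf χ)) :
    ∃ M, ∀ i ≥ M, ¬ Sat (suff w i) χ := by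
  rw [sat_GF] at h
  push_neg at h
  obtain ⟨k, hk⟩ := h
  refine ⟨k, fun i hi => ?_⟩
  have := hk (i - k)
  rwa [Nat.sub_add_cancel hi] at this

/-- Soundness of `eval`: on any suffix of a word satisfying all the `GF`
formulas of `C`, `eval C φ` entails `φ`. -/
lemma eval_sound {w : Word Ap} {C : Finset (F Ap)}
    (hC : ∀ χ, GFf χ ∈ C → Sat w (GFf χ)) :
    ∀ (φ : F Ap) (i : ℕ), Sat (suff w i) (eval C φ) → Sat (suff w i) φ := by
  intro φ
  induction φ with
  | tt => intro i h; exact h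
  | ff => intro i h; exact h
  | pos a => intro i h; exact h
  | nlit a => intro i h; exact h
  | and φ₁ φ₂ ih₁ ih₂ =>
    intro i h
    exact ⟨ih₁ i h.1, ih₂ i h.2⟩
  | or φ₁ φ₂ ih₁ ih₂ =>
    intro i h
    exact h.imp (ih₁ i) (ih₂ i)
  | next φ ih =>
    intro i h
    show Sat (suff (suff w i) 1) φ
    rw [suff_suff]
    have h' : Sat (suff (suff w i) 1) (eval C φ) := h
    rw [suff_suff] at h'
    exact ih _ h'
  | untl φ₁ φ₂ ih₁ ih₂ =>
    intro i h
    by_cases hc : GFf φ₂ ∈ C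
    · rw [eval, if_pos hc] at h
      rcases h with h | ⟨k, h2, h1⟩
      · have hgf := sat_GF.mp (hC φ₂ hc) i
        obtain ⟨m, hm⟩ := hgf
        refine ⟨m, ?_, fun j _ => ?_⟩
        · rw [suff_suff]; exact hm
        · have := h j
          rw [suff_suff] at this ⊢
          exact ih₁ _ this
      · refine ⟨k, ?_, fun j hj => ?_⟩
        · rw [suff_suff] at h2 ⊢; exact ih₂ _ h2
        · have := h1 j hj
          rw [suff_suff] at this ⊢
          exact ih₁ _ this
    · rw [eval, if_neg hc] at h
      exact absurd h id
  | wuntl φ₁ φ₂ ih₁ ih₂ =>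
    intro i h
    rcases h with h | ⟨k, h2, h1⟩
    · left
      intro k
      have := h k
      rw [suff_suff] at this ⊢
      exact ih₁ _ this
    · right
      refine ⟨k, ?_, fun j hj => ?_⟩
      · rw [suff_suff] at h2 ⊢; exact ih₂ _ h2
      · have := h1 j hj
        rw [suff_suff] at this ⊢
        exact ih₁ _ this
  | rel φ₁ φ₂ ih₁ ih₂ =>
    intro i h
    rcases h with h | ⟨k, h1, h2⟩
    · left
      intro k
      have := h k
      rw [suff_suff] at this ⊢
      exact ih₂ _ this
    · right
      refine ⟨k, ?_, fun j hj => ?_⟩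
      · rw [suff_suff] at h1 ⊢; exact ih₁ _ h1
      · have := h2 j hj
        rw [suff_suff] at this ⊢
        exact ih₂ _ this
  | srel φ₁ φ₂ ih₁ ih₂ =>
    intro i h
    by_cases hc : GFf φ₁ ∈ C
    · rw [eval, if_pos hc] at h
      rcases h with h | ⟨k, h1, h2⟩
      · have hgf := sat_GF.mp (hC φ₁ hc) i
        obtain ⟨m, hm⟩ := hgf
        refine ⟨m, ?_, fun j _ => ?_⟩
        · rw [suff_suff]; exact hm
        · have := h j
          rw [suff_suff] at this ⊢
          exact ih₂ _ this
      · refine ⟨k, ?_, fun j hj => ?_⟩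
        · rw [suff_suff] at h1 ⊢; exact ih₁ _ h1
        · have := h2 j hj
          rw [suff_suff] at this ⊢
          exact ih₂ _ this
    · rw [eval, if_neg hc] at h
      exact absurd h id

/-- Completeness of `eval`: on all sufficiently late suffixes,
`φ` entails `eval C φ`. -/
lemma eval_complete {w : Word Ap} {C : Finset (F Ap)} (φ : F Ap) :
    (∀ φ₁ φ₂, F.untl φ₁ φ₂ ∈ sf φ → GFf φ₂ ∉ C → ∃ M, ∀ i ≥ M, ¬ Sat (suff w i) φ₂) →
    (∀ φ₁ φ₂, F.srel φ₁ φ₂ ∈ sf φ → GFf φ₁ ∉ C → ∃ M, ∀ i ≥ M, ¬ Sat (suff w i) φ₁) →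
    ∃ N, ∀ i ≥ N, Sat (suff w i) φ → Sat (suff w i) (eval C φ) := by
  induction φ with
  | tt => exact fun _ _ => ⟨0, fun i _ h => h⟩
  | ff => exact fun _ _ => ⟨0, fun i _ h => h⟩
  | pos a => exact fun _ _ => ⟨0, fun i _ h => h⟩
  | nlit a => exact fun _ _ => ⟨0, fun i _ h => h⟩
  | and φ₁ φ₂ ih₁ ih₂ =>
    intro H1 H2
    obtain ⟨N₁, hN₁⟩ := ih₁
      (fun a b ha => H1 a b (Finset.mem_insert_of_mem (Finset.mem_union_left _ ha)))
      (fun a b ha => H2 a b (Finset.mem_insert_of_mem (Finset.mem_union_left _ ha)))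
    obtain ⟨N₂, hN₂⟩ := ih₂
      (fun a b ha => H1 a b (Finset.mem_insert_of_mem (Finset.mem_union_right _ ha)))
      (fun a b ha => H2 a b (Finset.mem_insert_of_mem (Finset.mem_union_right _ ha)))
    refine ⟨max N₁ N₂, fun i hi h => ?_⟩
    exact ⟨hN₁ i (le_trans (le_max_left _ _) hi) h.1,
           hN₂ i (le_trans (le_max_right _ _) hi) h.2⟩
  | or φ₁ φ₂ ih₁ ih₂ =>
    intro H1 H2
    obtain ⟨N₁, hN₁⟩ := ih₁
      (fun a b ha => H1 a b (Finset.mem_insert_of_mem (Finset.mem_union_left _ ha)))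
      (fun a b ha => H2 a b (Finset.mem_insert_of_mem (Finset.mem_union_left _ ha)))
    obtain ⟨N₂, hN₂⟩ := ih₂
      (fun a b ha => H1 a b (Finset.mem_insert_of_mem (Finset.mem_union_right _ ha)))
      (fun a b ha => H2 a b (Finset.mem_insert_of_mem (Finset.mem_union_right _ ha)))
    refine ⟨max N₁ N₂, fun i hi h => ?_⟩
    exact h.imp (hN₁ i (le_trans (le_max_left _ _) hi))
                (hN₂ i (le_trans (le_max_right _ _) hi))
  | next φ ih =>
    intro H1 H2
    obtain ⟨N, hN⟩ := ih
      (fun a b ha => H1 a b (Finset.mem_insert_of_mem ha))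
      (fun a b ha => H2 a b (Finset.mem_insert_of_mem ha))
    refine ⟨N, fun i hi h => ?_⟩
    have h' : Sat (suff (suff w i) 1) φ := h
    rw [suff_suff] at h'
    show Sat (suff (suff w i) 1) (eval C φ)
    rw [suff_suff]
    exact hN _ (le_trans hi (Nat.le_add_left _ _)) h'
  | untl φ₁ φ₂ ih₁ ih₂ =>
    intro H1 H2
    by_cases hc : GFf φ₂ ∈ C
    · obtain ⟨N₁, hN₁⟩ := ih₁
        (fun a b ha => H1 a b (Finset.mem_insert_of_mem (Finset.mem_union_left _ ha)))
        (fun a b ha => H2 a b (Finset.mem_insert_of_mem (Finset.mem_union_left _ ha)))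
      obtain ⟨N₂, hN₂⟩ := ih₂
        (fun a b ha => H1 a b (Finset.mem_insert_of_mem (Finset.mem_union_right _ ha)))
        (fun a b ha => H2 a b (Finset.mem_insert_of_mem (Finset.mem_union_right _ ha)))
      refine ⟨max N₁ N₂, fun i hi h => ?_⟩
      rw [eval, if_pos hc]
      obtain ⟨k, h2, h1⟩ := h
      right
      refine ⟨k, ?_, fun j hj => ?_⟩
      · rw [suff_suff] at h2 ⊢
        exact hN₂ _ (le_trans (le_trans (le_max_right _ _) hi) (Nat.le_add_left _ _)) h2
      · have := h1 j hj
        rw [suff_suff] at this ⊢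
        exact hN₁ _ (le_trans (le_trans (le_max_left _ _) hi) (Nat.le_add_left _ _)) this
    · obtain ⟨M, hM⟩ := H1 φ₁ φ₂ (Finset.mem_insert_self _ _) hc
      refine ⟨M, fun i hi h => ?_⟩
      exfalso
      obtain ⟨k, h2, _⟩ := h
      rw [suff_suff] at h2
      exact hM (k + i) (le_trans hi (Nat.le_add_left _ _)) h2
  | wuntl φ₁ φ₂ ih₁ ih₂ =>
    intro H1 H2
    obtain ⟨N₁, hN₁⟩ := ih₁
      (fun a b ha => H1 a b (Finset.mem_insert_of_mem (Finset.mem_union_left _ ha)))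
      (fun a b ha => H2 a b (Finset.mem_insert_of_mem (Finset.mem_union_left _ ha)))
    obtain ⟨N₂, hN₂⟩ := ih₂
      (fun a b ha => H1 a b (Finset.mem_insert_of_mem (Finset.mem_union_right _ ha)))
      (fun a b ha => H2 a b (Finset.mem_insert_of_mem (Finset.mem_union_right _ ha)))
    refine ⟨max N₁ N₂, fun i hi h => ?_⟩
    rcases h with h | ⟨k, h2, h1⟩
    · left
      intro k
      have := h k
      rw [suff_suff] at this ⊢
      exact hN₁ _ (le_trans (le_trans (le_max_left _ _) hi) (Nat.le_add_left _ _)) this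
    · right
      refine ⟨k, ?_, fun j hj => ?_⟩
      · rw [suff_suff] at h2 ⊢
        exact hN₂ _ (le_trans (le_trans (le_max_right _ _) hi) (Nat.le_add_left _ _)) h2
      · have := h1 j hj
        rw [suff_suff] at this ⊢
        exact hN₁ _ (le_trans (le_trans (le_max_left _ _) hi) (Nat.le_add_left _ _)) this
  | rel φ₁ φ₂ ih₁ ih₂ =>
    intro H1 H2
    obtain ⟨N₁, hN₁⟩ := ih₁
      (fun a b ha => H1 a b (Finset.mem_insert_of_mem (Finset.mem_union_left _ ha)))
      (fun a b ha => H2 a b (Finset.mem_insert_of_mem (Finset.mem_union_left _ ha)))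
    obtain ⟨N₂, hN₂⟩ := ih₂
      (fun a b ha => H1 a b (Finset.mem_insert_of_mem (Finset.mem_union_right _ ha)))
      (fun a b ha => H2 a b (Finset.mem_insert_of_mem (Finset.mem_union_right _ ha)))
    refine ⟨max N₁ N₂, fun i hi h => ?_⟩
    rcases h with h | ⟨k, h1, h2⟩
    · left
      intro k
      have := h k
      rw [suff_suff] at this ⊢
      exact hN₂ _ (le_trans (le_trans (le_max_right _ _) hi) (Nat.le_add_left _ _)) this
    · right
      refine ⟨k, ?_, fun j hj => ?_⟩
      · rw [suff_suff] at h1 ⊢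
        exact hN₁ _ (le_trans (le_trans (le_max_left _ _) hi) (Nat.le_add_left _ _)) h1
      · have := h2 j hj
        rw [suff_suff] at this ⊢
        exact hN₂ _ (le_trans (le_trans (le_max_right _ _) hi) (Nat.le_add_left _ _)) this
  | srel φ₁ φ₂ ih₁ ih₂ =>
    intro H1 H2
    by_cases hc : GFf φ₁ ∈ C
    · obtain ⟨N₁, hN₁⟩ := ih₁
        (fun a b ha => H1 a b (Finset.mem_insert_of_mem (Finset.mem_union_left _ ha)))
        (fun a b ha => H2 a b (Finset.mem_insert_of_mem (Finset.mem_union_left _ ha)))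
      obtain ⟨N₂, hN₂⟩ := ih₂
        (fun a b ha => H1 a b (Finset.mem_insert_of_mem (Finset.mem_union_right _ ha)))
        (fun a b ha => H2 a b (Finset.mem_insert_of_mem (Finset.mem_union_right _ ha)))
      refine ⟨max N₁ N₂, fun i hi h => ?_⟩
      rw [eval, if_pos hc]
      obtain ⟨k, h1, h2⟩ := h
      right
      refine ⟨k, ?_, fun j hj => ?_⟩
      · rw [suff_suff] at h1 ⊢
        exact hN₁ _ (le_trans (le_trans (le_max_left _ _) hi) (Nat.le_add_left _ _)) h1
      · have := h2 j hj
        rw [suff_suff] at this ⊢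
        exact hN₂ _ (le_trans (le_trans (le_max_right _ _) hi) (Nat.le_add_left _ _)) this
    · obtain ⟨M, hM⟩ := H2 φ₁ φ₂ (Finset.mem_insert_self _ _) hc
      refine ⟨M, fun i hi h => ?_⟩
      exfalso
      obtain ⟨k, h1, _⟩ := h
      rw [suff_suff] at h1
      exact hM (k + i) (le_trans hi (Nat.le_add_left _ _)) h1

end Aux

/-- for `φ = Gψ` and `B := B(φ)`, the formulas `Gψ`,
`ψ U G(eval(ψ,C))` and `G(eval(ψ,C)) R ψ` are pairwise equivalent under
context `⟨C,B⟩`. -/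
theorem flatten_G_lemma {Ap : Type} [Fintype Ap] [DecidableEq Ap] (ψ : F Ap) :
    ∀ C ⊆ Bset (Gf ψ),
      EquivUnder (Bset (Gf ψ)) C (Gf ψ) (F.untl ψ (Gf (eval C ψ))) ∧
      EquivUnder (Bset (Gf ψ)) C (Gf ψ) (F.rel (Gf (eval C ψ)) ψ) ∧
      EquivUnder (Bset (Gf ψ)) C (F.untl ψ (Gf (eval C ψ))) (F.rel (Gf (eval C ψ)) ψ) := by
  intro C hCB
  have hsub : sf ψ ⊆ sf (Gf ψ) := by
    intro σ hσ
    show σ ∈ sf (F.wuntl ψ F.ff)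
    rw [sf]
    exact Finset.mem_insert_of_mem (Finset.mem_union_left _ hσ)
  -- core: for every w in the context language, all three formulas are ↔ Gψ
  have main : ∀ w ∈ LangC (Bset (Gf ψ)) C,
      (Sat w (Gf ψ) ↔ Sat w (F.untl ψ (Gf (eval C ψ)))) ∧
      (Sat w (Gf ψ) ↔ Sat w (F.rel (Gf (eval C ψ)) ψ)) := by
    intro w hw
    have hC : ∀ χ, GFf χ ∈ C → Sat w (GFf χ) := fun χ h => hw.1 _ h
    have P1 : ∀ (i : ℕ), Sat (suff w i) (eval C ψ) → Sat (suff w i) ψ :=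
      eval_sound hC ψ
    have H1 : ∀ φ₁ φ₂, F.untl φ₁ φ₂ ∈ sf ψ → GFf φ₂ ∉ C →
        ∃ M, ∀ i ≥ M, ¬ Sat (suff w i) φ₂ := by
      intro φ₁ φ₂ hmem hnc
      have hB : GFf φ₂ ∈ Bset (Gf ψ) := by
        apply Finset.mem_union_left
        exact Finset.mem_biUnion.mpr ⟨F.untl φ₁ φ₂, hsub hmem, by simp⟩
      exact not_GF (hw.2 _ hB hnc)
    have H2 : ∀ φ₁ φ₂, F.srel φ₁ φ₂ ∈ sf ψ → GFf φ₁ ∉ C →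
        ∃ M, ∀ i ≥ M, ¬ Sat (suff w i) φ₁ := by
      intro φ₁ φ₂ hmem hnc
      have hB : GFf φ₁ ∈ Bset (Gf ψ) := by
        apply Finset.mem_union_left
        exact Finset.mem_biUnion.mpr ⟨F.srel φ₁ φ₂, hsub hmem, by simp⟩
      exact not_GF (hw.2 _ hB hnc)
    obtain ⟨N, hN⟩ := eval_complete (w := w) (C := C) ψ H1 H2
    constructor
    · constructor
      · intro hG
        rw [sat_Gf] at hG
        refine ⟨N, ?_, fun j _ => hG j⟩
        rw [sat_Gf]
        intro k
        rw [suff_suff]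
        exact hN (k + N) (Nat.le_add_left _ _) (hG (k + N))
      · rintro ⟨k, hGe, hbef⟩
        rw [sat_Gf] at hGe ⊢
        intro m
        by_cases hm : m < k
        · exact hbef m hm
        · have hkm : k ≤ m := le_of_not_gt hm
          have := hGe (m - k)
          rw [suff_suff, Nat.sub_add_cancel hkm] at this
          exact P1 m this
    · constructor
      · intro hG
        rw [sat_Gf] at hG
        exact Or.inl hG
      · rintro (h | ⟨k, hGe, hle⟩)
        · exact sat_Gf.mpr h
        · rw [sat_Gf]
          intro m
          by_cases hm : m ≤ k
          · exact hle m hm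
          · have hkm : k ≤ m := le_of_lt (lt_of_not_ge hm)
            rw [sat_Gf] at hGe
            have := hGe (m - k)
            rw [suff_suff, Nat.sub_add_cancel hkm] at this
            exact P1 m this
  refine ⟨fun w hw => (main w hw).1, fun w hw => (main w hw).2,
    fun w hw => ((main w hw).1.symm.trans (main w hw).2)⟩

end LTLNorm
end

section
/- For every extended LTL formula with placeholders φ and all extended LTL formulas ψ: (1) φ[GF ψ] ≡ (GF ψ ∧ φ[tt]) ∨ φ[ff]; (2) φ[FG ψ] ≡ (FG ψ ∧ φ[tt]) ∨ φ[ff]. -/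
namespace ExtLTL

/-- Extended LTL formulas, with the limit operators `GF` and `FG` as atomic
operators. -/
inductive E (Ap : Type) : Type
  | tt    : E Ap
  | ff    : E Ap
  | pos   : Ap → E Ap
  | nlit  : Ap → E Ap
  | and   : E Ap → E Ap → E Ap
  | or    : E Ap → E Ap → E Ap
  | next  : E Ap → E Ap
  | untl  : E Ap → E Ap → E Ap
  | wuntl : E Ap → E Ap → E Ap
  | gf    : E Ap → E Ap
  | fg    : E Ap → E Ap
  deriving DecidableEq

/-- Infinite words over the alphabet `2^Ap`. -/
abbrev Word (Ap : Type) := ℕ → Set Ap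

/-- Suffix of a word starting at position `i`. -/
def suff {Ap : Type} (w : Word Ap) (i : ℕ) : Word Ap := fun n => w (n + i)

/-- Satisfaction relation for extended LTL. -/
def Sat {Ap : Type} : Word Ap → E Ap → Prop
  | _, E.tt => True
  | _, E.ff => False
  | w, E.pos a => a ∈ w 0
  | w, E.nlit a => a ∉ w 0
  | w, E.and φ ψ => Sat w φ ∧ Sat w ψ
  | w, E.or φ ψ => Sat w φ ∨ Sat w ψ
  | w, E.next φ => Sat (suff w 1) φ
  | w, E.untl φ ψ => ∃ k, Sat (suff w k) ψ ∧ ∀ j < k, Sat (suff w j) φ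
  | w, E.wuntl φ ψ => (∀ k, Sat (suff w k) φ) ∨ ∃ k, Sat (suff w k) ψ ∧ ∀ j < k, Sat (suff w j) φ
  | w, E.gf φ => ∀ i : ℕ, ∃ j : ℕ, i ≤ j ∧ Sat (suff w j) φ
  | w, E.fg φ => ∃ i : ℕ, ∀ j : ℕ, i ≤ j → Sat (suff w j) φ

/-- Equivalence of extended LTL formulas. -/
def Equiv {Ap : Type} (φ ψ : E Ap) : Prop := ∀ w : Word Ap, Sat w φ ↔ Sat w ψ

/-- G φ := φ W ff. -/
def Gf {Ap : Type} (φ : E Ap) : E Ap := E.wuntl φ E.ff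

/-- Number of nodes of the syntax tree. -/
def size {Ap : Type} : E Ap → ℕ
  | E.tt => 1
  | E.ff => 1
  | E.pos _ => 1
  | E.nlit _ => 1
  | E.and φ ψ => size φ + size ψ + 1
  | E.or φ ψ => size φ + size ψ + 1
  | E.next φ => size φ + 1
  | E.untl φ ψ => size φ + size ψ + 1
  | E.wuntl φ ψ => size φ + size ψ + 1
  | E.gf φ => size φ + 1
  | E.fg φ => size φ + 1

/-- Formulas with placeholders: extended LTL formulas over `Option Ap`, where
the extra atomic proposition `pos none` is the placeholder `[·]`. -/
abbrev EP (Ap : Type) := E (Option Ap)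

/-- The placeholder occurs only positively (never negated). -/
def posOnly {Ap : Type} : EP Ap → Prop
  | E.nlit none => False
  | E.and φ ψ => posOnly φ ∧ posOnly ψ
  | E.or φ ψ => posOnly φ ∧ posOnly ψ
  | E.next φ => posOnly φ
  | E.untl φ ψ => posOnly φ ∧ posOnly ψ
  | E.wuntl φ ψ => posOnly φ ∧ posOnly ψ
  | E.gf φ => posOnly φ
  | E.fg φ => posOnly φ
  | _ => True

/-- `subst φ ψ = φ[ψ]`: substitute `ψ` for every occurrence of the placeholder
in `φ`. -/
def subst {Ap : Type} : EP Ap → E Ap → E Ap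
  | E.tt, _ => E.tt
  | E.ff, _ => E.ff
  | E.pos none, ψ => ψ
  | E.pos (some a), _ => E.pos a
  | E.nlit none, _ => E.ff    -- never occurs in a formula with positive placeholders
  | E.nlit (some a), _ => E.nlit a
  | E.and φ₁ φ₂, ψ => E.and (subst φ₁ ψ) (subst φ₂ ψ)
  | E.or φ₁ φ₂, ψ => E.or (subst φ₁ ψ) (subst φ₂ ψ)
  | E.next φ, ψ => E.next (subst φ ψ)
  | E.untl φ₁ φ₂, ψ => E.untl (subst φ₁ ψ) (subst φ₂ ψ)
  | E.wuntl φ₁ φ₂, ψ => E.wuntl (subst φ₁ ψ) (subst φ₂ ψ)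
  | E.gf φ, ψ => E.gf (subst φ ψ)
  | E.fg φ, ψ => E.fg (subst φ ψ)

theorem suff_suff {Ap : Type} (w : Word Ap) (i j : ℕ) :
    suff (suff w i) j = suff w (j + i) :=
  funext fun n => congrArg w (add_assoc n j i)

theorem gf_inv {Ap : Type} (ψ : E Ap) (w : Word Ap) (k : ℕ) :
    Sat (suff w k) (E.gf ψ) ↔ Sat w (E.gf ψ) := by
  simp only [Sat, suff_suff]
  constructor
  · intro h i
    obtain ⟨j, hij, hj⟩ := h i
    exact ⟨j + k, le_trans hij (Nat.le_add_right _ _), hj⟩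
  · intro h i
    obtain ⟨j, hij, hj⟩ := h (i + k)
    refine ⟨j - k, by omega, ?_⟩
    have : j - k + k = j := by omega
    rw [this]; exact hj

theorem fg_inv {Ap : Type} (ψ : E Ap) (w : Word Ap) (k : ℕ) :
    Sat (suff w k) (E.fg ψ) ↔ Sat w (E.fg ψ) := by
  simp only [Sat, suff_suff]
  constructor
  · intro h
    obtain ⟨i, hi⟩ := h
    refine ⟨i + k, fun j hj => ?_⟩
    have := hi (j - k) (by omega)
    have hjk : j - k + k = j := by omega
    rwa [hjk] at this
  · intro h
    obtain ⟨i, hi⟩ := h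
    exact ⟨i, fun j hj => hi (j + k) (by omega)⟩

theorem mono {Ap : Type} :
    ∀ φ : EP Ap, posOnly φ → ∀ χ₁ χ₂ : E Ap,
      (∀ w : Word Ap, Sat w χ₁ → Sat w χ₂) →
      ∀ w : Word Ap, Sat w (subst φ χ₁) → Sat w (subst φ χ₂) := by
  intro φ
  induction φ with
  | tt => intro _ _ _ _ _ h; exact h
  | ff => intro _ _ _ _ _ h; exact h
  | pos a =>
    cases a with
    | none => intro _ χ₁ χ₂ h w; exact h w
    | some a => intro _ _ _ _ _ h; exact h
  | nlit a =>
    cases a with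
    | none => intro hp; exact absurd hp (by simp [posOnly])
    | some a => intro _ _ _ _ _ h; exact h
  | and φ₁ φ₂ ih₁ ih₂ =>
    rintro ⟨h1, h2⟩ χ₁ χ₂ h w ⟨ha, hb⟩
    exact ⟨ih₁ h1 χ₁ χ₂ h w ha, ih₂ h2 χ₁ χ₂ h w hb⟩
  | or φ₁ φ₂ ih₁ ih₂ =>
    rintro ⟨h1, h2⟩ χ₁ χ₂ h w (ha | hb)
    · exact Or.inl (ih₁ h1 χ₁ χ₂ h w ha)
    · exact Or.inr (ih₂ h2 χ₁ χ₂ h w hb)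
  | next φ ih =>
    intro hp χ₁ χ₂ h w hs
    exact ih hp χ₁ χ₂ h _ hs
  | untl φ₁ φ₂ ih₁ ih₂ =>
    rintro ⟨h1, h2⟩ χ₁ χ₂ h w ⟨k, hb, ha⟩
    exact ⟨k, ih₂ h2 χ₁ χ₂ h _ hb, fun j hj => ih₁ h1 χ₁ χ₂ h _ (ha j hj)⟩
  | wuntl φ₁ φ₂ ih₁ ih₂ =>
    rintro ⟨h1, h2⟩ χ₁ χ₂ h w (hg | ⟨k, hb, ha⟩)
    · exact Or.inl fun k => ih₁ h1 χ₁ χ₂ h _ (hg k)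
    · exact Or.inr ⟨k, ih₂ h2 χ₁ χ₂ h _ hb, fun j hj => ih₁ h1 χ₁ χ₂ h _ (ha j hj)⟩
  | gf φ ih =>
    intro hp χ₁ χ₂ h w hg i
    obtain ⟨j, hij, hj⟩ := hg i
    exact ⟨j, hij, ih hp χ₁ χ₂ h _ hj⟩
  | fg φ ih =>
    rintro hp χ₁ χ₂ h w ⟨i, hi⟩
    exact ⟨i, fun j hj => ih hp χ₁ χ₂ h _ (hi j hj)⟩

theorem key {Ap : Type} :
    ∀ φ : EP Ap, posOnly φ → ∀ χ : E Ap,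
      (∀ (w : Word Ap) (k : ℕ), Sat (suff w k) χ ↔ Sat w χ) →
      ∀ w : Word Ap,
        Sat w (subst φ χ) ↔ (Sat w χ ∧ Sat w (subst φ E.tt)) ∨ Sat w (subst φ E.ff) := by
  intro φ
  induction φ with
  | tt =>
    intro _ χ _ w; simp only [subst, Sat]; tauto
  | ff =>
    intro _ χ _ w; simp only [subst, Sat]; tauto
  | pos a =>
    cases a with
    | none => intro _ χ _ w; simp only [subst, Sat]; tauto
    | some a => intro _ χ _ w; simp only [subst, Sat]; tauto
  | nlit a =>
    cases a with
    | none => intro hp; exact absurd hp (by simp [posOnly])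
    | some a => intro _ χ _ w; simp only [subst, Sat]; tauto
  | and φ₁ φ₂ ih₁ ih₂ =>
    rintro ⟨h1, h2⟩ χ hinv w
    have m₁ := mono φ₁ h1 E.ff E.tt (fun _ h => h.elim)
    have m₂ := mono φ₂ h2 E.ff E.tt (fun _ h => h.elim)
    have i₁ := ih₁ h1 χ hinv w
    have i₂ := ih₂ h2 χ hinv w
    simp only [subst, Sat] at *
    tauto
  | or φ₁ φ₂ ih₁ ih₂ =>
    rintro ⟨h1, h2⟩ χ hinv w
    have i₁ := ih₁ h1 χ hinv w
    have i₂ := ih₂ h2 χ hinv w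
    simp only [subst, Sat] at *
    tauto
  | next φ ih =>
    intro hp χ hinv w
    have i := ih hp χ hinv (suff w 1)
    simp only [subst, Sat] at *
    rw [i, hinv w 1]
  | untl φ₁ φ₂ ih₁ ih₂ =>
    rintro ⟨h1, h2⟩ χ hinv w
    have m₁ := mono φ₁ h1 E.ff E.tt (fun _ h => h.elim)
    have m₂ := mono φ₂ h2 E.ff E.tt (fun _ h => h.elim)
    have H₁ : ∀ k, Sat (suff w k) (subst φ₁ χ) ↔
        (Sat w χ ∧ Sat (suff w k) (subst φ₁ E.tt)) ∨ Sat (suff w k) (subst φ₁ E.ff) := by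
      intro k; rw [ih₁ h1 χ hinv (suff w k), hinv w k]
    have H₂ : ∀ k, Sat (suff w k) (subst φ₂ χ) ↔
        (Sat w χ ∧ Sat (suff w k) (subst φ₂ E.tt)) ∨ Sat (suff w k) (subst φ₂ E.ff) := by
      intro k; rw [ih₂ h2 χ hinv (suff w k), hinv w k]
    simp only [subst, Sat]
    by_cases hχ : Sat w χ
    · constructor
      · rintro ⟨k, hb, ha⟩
        refine Or.inl ⟨hχ, k, ?_, fun j hj => ?_⟩
        · rcases (H₂ k).mp hb with ⟨_, ht⟩ | hf
          · exact ht
          · exact m₂ _ hf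
        · rcases (H₁ j).mp (ha j hj) with ⟨_, ht⟩ | hf
          · exact ht
          · exact m₁ _ hf
      · rintro (⟨_, k, hb, ha⟩ | ⟨k, hb, ha⟩)
        · exact ⟨k, (H₂ k).mpr (Or.inl ⟨hχ, hb⟩),
            fun j hj => (H₁ j).mpr (Or.inl ⟨hχ, ha j hj⟩)⟩
        · exact ⟨k, (H₂ k).mpr (Or.inr hb),
            fun j hj => (H₁ j).mpr (Or.inr (ha j hj))⟩
    · constructor
      · rintro ⟨k, hb, ha⟩
        refine Or.inr ⟨k, ?_, fun j hj => ?_⟩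
        · rcases (H₂ k).mp hb with ⟨hc, _⟩ | hf
          · exact absurd hc hχ
          · exact hf
        · rcases (H₁ j).mp (ha j hj) with ⟨hc, _⟩ | hf
          · exact absurd hc hχ
          · exact hf
      · rintro (⟨hc, _⟩ | ⟨k, hb, ha⟩)
        · exact absurd hc hχ
        · exact ⟨k, (H₂ k).mpr (Or.inr hb),
            fun j hj => (H₁ j).mpr (Or.inr (ha j hj))⟩
  | wuntl φ₁ φ₂ ih₁ ih₂ =>
    rintro ⟨h1, h2⟩ χ hinv w
    have m₁ := mono φ₁ h1 E.ff E.tt (fun _ h => h.elim)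
    have m₂ := mono φ₂ h2 E.ff E.tt (fun _ h => h.elim)
    have H₁ : ∀ k, Sat (suff w k) (subst φ₁ χ) ↔
        (Sat w χ ∧ Sat (suff w k) (subst φ₁ E.tt)) ∨ Sat (suff w k) (subst φ₁ E.ff) := by
      intro k; rw [ih₁ h1 χ hinv (suff w k), hinv w k]
    have H₂ : ∀ k, Sat (suff w k) (subst φ₂ χ) ↔
        (Sat w χ ∧ Sat (suff w k) (subst φ₂ E.tt)) ∨ Sat (suff w k) (subst φ₂ E.ff) := by
      intro k; rw [ih₂ h2 χ hinv (suff w k), hinv w k]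
    simp only [subst, Sat]
    by_cases hχ : Sat w χ
    · constructor
      · rintro (hg | ⟨k, hb, ha⟩)
        · refine Or.inl ⟨hχ, Or.inl fun k => ?_⟩
          rcases (H₁ k).mp (hg k) with ⟨_, ht⟩ | hf
          · exact ht
          · exact m₁ _ hf
        · refine Or.inl ⟨hχ, Or.inr ⟨k, ?_, fun j hj => ?_⟩⟩
          · rcases (H₂ k).mp hb with ⟨_, ht⟩ | hf
            · exact ht
            · exact m₂ _ hf
          · rcases (H₁ j).mp (ha j hj) with ⟨_, ht⟩ | hf
            · exact ht
            · exact m₁ _ hf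
      · rintro (⟨_, hg | ⟨k, hb, ha⟩⟩ | hg | ⟨k, hb, ha⟩)
        · exact Or.inl fun k => (H₁ k).mpr (Or.inl ⟨hχ, hg k⟩)
        · exact Or.inr ⟨k, (H₂ k).mpr (Or.inl ⟨hχ, hb⟩),
            fun j hj => (H₁ j).mpr (Or.inl ⟨hχ, ha j hj⟩)⟩
        · exact Or.inl fun k => (H₁ k).mpr (Or.inr (hg k))
        · exact Or.inr ⟨k, (H₂ k).mpr (Or.inr hb),
            fun j hj => (H₁ j).mpr (Or.inr (ha j hj))⟩
    · have elim₁ : ∀ k, Sat (suff w k) (subst φ₁ χ) → Sat (suff w k) (subst φ₁ E.ff) := by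
        intro k h
        rcases (H₁ k).mp h with ⟨hc, _⟩ | hf
        · exact absurd hc hχ
        · exact hf
      have elim₂ : ∀ k, Sat (suff w k) (subst φ₂ χ) → Sat (suff w k) (subst φ₂ E.ff) := by
        intro k h
        rcases (H₂ k).mp h with ⟨hc, _⟩ | hf
        · exact absurd hc hχ
        · exact hf
      constructor
      · rintro (hg | ⟨k, hb, ha⟩)
        · exact Or.inr (Or.inl fun k => elim₁ k (hg k))
        · exact Or.inr (Or.inr ⟨k, elim₂ k hb, fun j hj => elim₁ j (ha j hj)⟩)
      · rintro (⟨hc, _⟩ | hg | ⟨k, hb, ha⟩)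
        · exact absurd hc hχ
        · exact Or.inl fun k => (H₁ k).mpr (Or.inr (hg k))
        · exact Or.inr ⟨k, (H₂ k).mpr (Or.inr hb),
            fun j hj => (H₁ j).mpr (Or.inr (ha j hj))⟩
  | gf φ ih =>
    intro hp χ hinv w
    have m := mono φ hp E.ff E.tt (fun _ h => h.elim)
    have H : ∀ k, Sat (suff w k) (subst φ χ) ↔
        (Sat w χ ∧ Sat (suff w k) (subst φ E.tt)) ∨ Sat (suff w k) (subst φ E.ff) := by
      intro k; rw [ih hp χ hinv (suff w k), hinv w k]
    simp only [subst, Sat]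
    by_cases hχ : Sat w χ
    · constructor
      · intro hg
        refine Or.inl ⟨hχ, fun i => ?_⟩
        obtain ⟨j, hij, hj⟩ := hg i
        refine ⟨j, hij, ?_⟩
        rcases (H j).mp hj with ⟨_, ht⟩ | hf
        · exact ht
        · exact m _ hf
      · rintro (⟨_, hg⟩ | hg) <;> intro i <;> obtain ⟨j, hij, hj⟩ := hg i
        · exact ⟨j, hij, (H j).mpr (Or.inl ⟨hχ, hj⟩)⟩
        · exact ⟨j, hij, (H j).mpr (Or.inr hj)⟩
    · constructor
      · intro hg
        refine Or.inr fun i => ?_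
        obtain ⟨j, hij, hj⟩ := hg i
        rcases (H j).mp hj with ⟨hc, _⟩ | hf
        · exact absurd hc hχ
        · exact ⟨j, hij, hf⟩
      · rintro (⟨hc, _⟩ | hg)
        · exact absurd hc hχ
        · intro i
          obtain ⟨j, hij, hj⟩ := hg i
          exact ⟨j, hij, (H j).mpr (Or.inr hj)⟩
  | fg φ ih =>
    intro hp χ hinv w
    have m := mono φ hp E.ff E.tt (fun _ h => h.elim)
    have H : ∀ k, Sat (suff w k) (subst φ χ) ↔
        (Sat w χ ∧ Sat (suff w k) (subst φ E.tt)) ∨ Sat (suff w k) (subst φ E.ff) := by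
      intro k; rw [ih hp χ hinv (suff w k), hinv w k]
    simp only [subst, Sat]
    by_cases hχ : Sat w χ
    · constructor
      · rintro ⟨i, hi⟩
        refine Or.inl ⟨hχ, i, fun j hj => ?_⟩
        rcases (H j).mp (hi j hj) with ⟨_, ht⟩ | hf
        · exact ht
        · exact m _ hf
      · rintro (⟨_, i, hi⟩ | ⟨i, hi⟩)
        · exact ⟨i, fun j hj => (H j).mpr (Or.inl ⟨hχ, hi j hj⟩)⟩
        · exact ⟨i, fun j hj => (H j).mpr (Or.inr (hi j hj))⟩
    · constructor
      · rintro ⟨i, hi⟩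
        refine Or.inr ⟨i, fun j hj => ?_⟩
        rcases (H j).mp (hi j hj) with ⟨hc, _⟩ | hf
        · exact absurd hc hχ
        · exact hf
      · rintro (⟨hc, _⟩ | ⟨i, hi⟩)
        · exact absurd hc hχ
        · exact ⟨i, fun j hj => (H j).mpr (Or.inr (hi j hj))⟩

/-- pulling limit subformulas out of any formula. -/
theorem pull_limit_out {Ap : Type} [Fintype Ap] :
    ∀ φ : EP Ap, posOnly φ → ∀ ψ : E Ap,
      -- (1)  φ[GF ψ] ≡ (GF ψ ∧ φ[tt]) ∨ φ[ff]
      Equiv (subst φ (E.gf ψ))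
            (E.or (E.and (E.gf ψ) (subst φ E.tt)) (subst φ E.ff)) ∧
      -- (2)  φ[FG ψ] ≡ (FG ψ ∧ φ[tt]) ∨ φ[ff]
      Equiv (subst φ (E.fg ψ))
            (E.or (E.and (E.fg ψ) (subst φ E.tt)) (subst φ E.ff)) := by
  intro φ hpos ψ
  exact ⟨fun w => key φ hpos (E.gf ψ) (gf_inv ψ) w,
         fun w => key φ hpos (E.fg ψ) (fg_inv ψ) w⟩

end ExtLTL
end
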